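/- Let I1(t) = ∑_{d≥0} (∏_{j=1}^{d}(5j−3))^5 / (5^{5d}·(5d+1)!) · t^{5d+1} ∈ ℚ[[t]], and let D := t·d/dt. Then y := t·I1(t) satisfies the same Picard–Fuchs equation t^5 · D^5 y = 5^5 · (D−1)(D−2)(D−3)(D−4)(D−5) y. -/

import Mathlib

open PowerSeries

/-- The series `I1` of the FJRW I-function of the quintic. -/
noncomputable def fjrwI1 : PowerSeries ℚ :=
  PowerSeries.mk fun n =>
    if n % 5 = 1 then
      ((∏ j ∈ Finset.range (n / 5), (5 * (j : ℚ) + 2)) ^ 5) / (5 ^ (n - 1) * n.factorial)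
    else 0

/-- The Euler derivation `D = t d/dt` on `ℚ⟦t⟧`. -/
noncomputable def eulerD : PowerSeries ℚ → PowerSeries ℚ :=
  fun f => PowerSeries.X * PowerSeries.derivative ℚ f

/-- The operator `D - k`. -/
noncomputable def eulerE (k : ℚ) : PowerSeries ℚ → PowerSeries ℚ :=
  fun f => eulerD f - PowerSeries.C k * f

lemma coeff_eulerD (f : PowerSeries ℚ) (n : ℕ) :
    PowerSeries.coeff n (eulerD f) = n * PowerSeries.coeff n f := by
  cases n with
  | zero => simp [eulerD]
  | succ m =>
    simp [eulerD, PowerSeries.coeff_succ_X_mul, PowerSeries.coeff_derivative]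
    ring

lemma coeff_eulerD_iter (k : ℕ) (f : PowerSeries ℚ) (n : ℕ) :
    PowerSeries.coeff n (eulerD^[k] f) = (n : ℚ) ^ k * PowerSeries.coeff n f := by
  induction k with
  | zero => simp
  | succ m ih =>
    rw [Function.iterate_succ_apply', coeff_eulerD, ih, pow_succ]
    ring

lemma coeff_y (n : ℕ) :
    PowerSeries.coeff (n + 1) (PowerSeries.X * fjrwI1) =
      if n % 5 = 1 then
        ((∏ j ∈ Finset.range (n / 5), (5 * (j : ℚ) + 2)) ^ 5) / (5 ^ (n - 1) * n.factorial)
      else 0 := by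
  rw [PowerSeries.coeff_succ_X_mul]
  simp [fjrwI1]

lemma coeff_eulerE (k : ℚ) (f : PowerSeries ℚ) (n : ℕ) :
    PowerSeries.coeff n (eulerE k f) = ((n : ℚ) - k) * PowerSeries.coeff n f := by
  simp [eulerE, coeff_eulerD]
  ring

theorem stmt_13 :
    PowerSeries.X ^ 5 * eulerD^[5] (PowerSeries.X * fjrwI1) =
      5 ^ 5 * eulerE 1 (eulerE 2 (eulerE 3 (eulerE 4 (eulerE 5
        (PowerSeries.X * fjrwI1))))) := by
  ext n
  have h5 : (5 : PowerSeries ℚ) ^ 5 = PowerSeries.C ((5 : ℚ) ^ 5) := by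
    rw [← map_ofNat (PowerSeries.C (R := ℚ)) 5, ← map_pow]
  rw [h5, PowerSeries.coeff_C_mul, coeff_eulerE, coeff_eulerE, coeff_eulerE,
    coeff_eulerE, coeff_eulerE, PowerSeries.coeff_X_pow_mul']
  simp only [coeff_eulerD_iter]
  rcases lt_or_ge n 5 with hn | hn
  · rw [if_neg (by omega)]
    interval_cases n <;>
      simp [PowerSeries.coeff_zero_X_mul, coeff_y 0, coeff_y 1, coeff_y 2, coeff_y 3]
  · obtain ⟨m, rfl⟩ : ∃ m, n = m + 5 := ⟨n - 5, by omega⟩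
    rw [if_pos (by omega)]
    simp only [Nat.add_sub_cancel]
    by_cases hm : m % 5 = 2
    · obtain ⟨d, rfl⟩ : ∃ d, m = 5 * d + 2 := ⟨m / 5, by omega⟩
      have e1 : 5 * d + 2 = (5 * d + 1) + 1 := rfl
      have e2 : 5 * d + 2 + 5 = (5 * d + 6) + 1 := rfl
      rw [e1, e2, coeff_y, coeff_y, if_pos (by omega), if_pos (by omega)]
      have q1 : (5 * d + 1) / 5 = d := by omega
      have q2 : (5 * d + 6) / 5 = d + 1 := by omega
      have q3 : (5 * d + 1) - 1 = 5 * d := by omega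
      have q4 : (5 * d + 6) - 1 = 5 * d + 5 := by omega
      rw [q1, q2, q3, q4, Finset.prod_range_succ]
      have hfac : ((5 * d + 6).factorial : ℚ) =
          (5 * d + 6) * (5 * d + 5) * (5 * d + 4) * (5 * d + 3) * (5 * d + 2) *
            ((5 * d + 1).factorial) := by
        rw [show 5 * d + 6 = (5 * d + 5) + 1 from rfl, Nat.factorial_succ,
          show 5 * d + 5 = (5 * d + 4) + 1 from rfl, Nat.factorial_succ,
          show 5 * d + 4 = (5 * d + 3) + 1 from rfl, Nat.factorial_succ,
          show 5 * d + 3 = (5 * d + 2) + 1 from rfl, Nat.factorial_succ,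
          show 5 * d + 2 = (5 * d + 1) + 1 from rfl, Nat.factorial_succ]
        push_cast
        ring
      rw [hfac]
      have hf1 : ((5 * d + 1).factorial : ℚ) ≠ 0 := by
        exact_mod_cast (5 * d + 1).factorial_ne_zero
      have h5p : (5 : ℚ) ^ (5 * d + 5) ≠ 0 := by positivity
      have h5p' : (5 : ℚ) ^ (5 * d) ≠ 0 := by positivity
      push_cast
      field_simp
      ring
    · have h1 : PowerSeries.coeff m (PowerSeries.X * fjrwI1) = 0 := by
        rcases m with _ | k
        · exact PowerSeries.coeff_zero_X_mul fjrwI1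
        · rw [coeff_y, if_neg (by omega)]
      have h2 : PowerSeries.coeff (m + 5) (PowerSeries.X * fjrwI1) = 0 := by
        rw [show m + 5 = (m + 4) + 1 from rfl, coeff_y, if_neg (by omega)]
      rw [h1, h2]
      ring
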